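/- Let q be a power of 2. Then there exists a set S of q(q+1)/2 points of PG(2,q), none of which is absolute with respect to the pseudo polarity, such that no three distinct points of S are pairwise conjugate; that is, S induces a triangle-free subgraph of the Erdős–Rényi graph ER_q containing no absolute points. In particular, the independence number of the Erdős–Rényi hypergraph of triangles H_q (the 3-uniform hypergraph whose vertices are the non-absolute points of ER_q and whose edges are the triangles of ER_q) is at least q(q+1)/2. -/

import Mathlib

open Projectivization

/-- Two points of `PG(2,q)`, `q` even, are conjugate with respect to the pseudo polarity
if the bilinear form `p₁q₁ + p₃q₂ + p₂q₃` vanishes (this is independent of the chosen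
representatives). -/
def ConjEven {F : Type} [Field F] (P Q : Projectivization F (Fin 3 → F)) : Prop :=
  P.rep 0 * Q.rep 0 + P.rep 2 * Q.rep 1 + P.rep 1 * Q.rep 2 = 0

section Aux

variable {F : Type} [Field F]

/-- The vector `(1, a, b)`. -/
private def vb (p : F × F) : Fin 3 → F := ![1, p.1, p.2]

private lemma vb_ne_zero (p : F × F) : vb p ≠ 0 := by
  intro h
  have := congrFun h 0
  simp [vb] at this

/-- The point `(1 : a : b)` of `PG(2,q)`. -/
private noncomputable def pt (p : F × F) : Projectivization F (Fin 3 → F) :=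
  Projectivization.mk F (vb p) (vb_ne_zero p)

private lemma vb0 (p : F × F) : vb p 0 = 1 := rfl
private lemma vb1 (p : F × F) : vb p 1 = p.1 := rfl
private lemma vb2 (p : F × F) : vb p 2 = p.2 := rfl

private lemma pt_rep (p : F × F) : ∃ u : Fˣ, ∀ i, (pt p).rep i = (u : F) * vb p i := by
  have h : Projectivization.mk F (pt p).rep (pt p).rep_nonzero = Projectivization.mk F (vb p) (vb_ne_zero p) :=
    (pt p).mk_rep
  rw [Projectivization.mk_eq_mk_iff] at h
  obtain ⟨u, hu⟩ := h
  exact ⟨u, fun i => by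
    have := congrFun hu i
    simpa [Units.smul_def] using this.symm⟩

private lemma pt_injective : Function.Injective (pt (F := F)) := by
  intro p p' h
  rw [pt, pt, Projectivization.mk_eq_mk_iff] at h
  obtain ⟨u, hu⟩ := h
  have h0 := congrFun hu 0
  have h1 := congrFun hu 1
  have h2 := congrFun hu 2
  simp only [Units.smul_def, Pi.smul_apply, smul_eq_mul, vb0, vb1, vb2, mul_one] at h0 h1 h2
  have : (u : F) = 1 := h0
  rw [this, one_mul] at h1 h2
  exact Prod.ext h1.symm h2.symm

private lemma conj_iff (p p' : F × F) :
    ConjEven (pt p) (pt p') ↔ 1 + p.2 * p'.1 + p.1 * p'.2 = 0 := by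
  obtain ⟨u, hu⟩ := pt_rep p
  obtain ⟨w, hw⟩ := pt_rep p'
  unfold ConjEven
  rw [hu 0, hu 1, hu 2, hw 0, hw 1, hw 2, vb0, vb1, vb2, vb0, vb1, vb2]
  have key : (u : F) * 1 * ((w : F) * 1) + (u : F) * p.2 * ((w : F) * p'.1) +
      (u : F) * p.1 * ((w : F) * p'.2)
      = ((u : F) * (w : F)) * (1 + p.2 * p'.1 + p.1 * p'.2) := by ring
  rw [key, mul_eq_zero]
  simp [u.ne_zero, w.ne_zero]

end Aux


/-- Let `q = 2ⁿ`. There is a set `S` of `q(q+1)/2` points of `PG(2,q)`, none of which is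
absolute with respect to the pseudo polarity, such that no three distinct points of `S`
are pairwise conjugate; i.e. `S` induces a triangle-free subgraph of `ER_q` with no
absolute points, so the independence number of the Erdős–Rényi hypergraph of triangles
`H_q` is at least `q(q+1)/2`. -/
theorem exists_triangle_free_set
    (n q : ℕ) (hn : 0 < n) (hq : q = 2 ^ n)
    (F : Type) [Field F] [Fintype F] (hF : Fintype.card F = q) :
    ∃ S : Set (Projectivization F (Fin 3 → F)),
      S.ncard = q * (q + 1) / 2 ∧
      (∀ P ∈ S, ¬ ConjEven P P) ∧
      (∀ P ∈ S, ∀ Q ∈ S, ∀ R ∈ S, P ≠ Q → Q ≠ R → P ≠ R →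
        ¬ (ConjEven P Q ∧ ConjEven Q R ∧ ConjEven P R)) := by
  classical
  subst hq
  -- `F` has characteristic 2
  haveI hchar : CharP F 2 := by
    obtain ⟨m, hp, hcard⟩ := FiniteField.card F (ringChar F)
    have hdvd : ringChar F ∣ 2 ^ n := by
      rw [← hF, hcard]
      exact dvd_pow_self _ m.2.ne'
    have h2 : ringChar F = 2 :=
      (Nat.prime_dvd_prime_iff_eq hp Nat.prime_two).1 (hp.dvd_of_dvd_pow hdvd)
    exact h2 ▸ ringChar.charP F
  have htwo : (2 : F) = 0 := by exact_mod_cast CharP.cast_eq_zero F 2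
  letI : Algebra (ZMod 2) F := ZMod.algebra F 2
  -- a linear functional `T` with `T 1 = 1`
  have hind : LinearIndepOn (ZMod 2) id ({1} : Set F) :=
    LinearIndepOn.singleton one_ne_zero
  set B := Module.Basis.extend hind with hB
  have hmem : (1 : F) ∈ hind.extend (Set.subset_univ _) :=
    hind.subset_extend _ rfl
  set T : F →ₗ[ZMod 2] ZMod 2 := B.coord ⟨1, hmem⟩ with hT
  have hT1 : T 1 = 1 := by
    have h1 : B ⟨1, hmem⟩ = (1 : F) := Module.Basis.extend_apply_self hind _
    have h2 : T (B ⟨1, hmem⟩) = 1 := by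
      rw [hT, Module.Basis.coord_apply, Module.Basis.repr_self]
      simp
    rw [h1] at h2
    exact h2
  -- the kernel of `T` has `2 ^ (n-1)` elements
  set T' : F →+ ZMod 2 := T.toAddMonoidHom with hT'
  have hsurj : Function.Surjective T' := by
    intro z
    refine ⟨z • (1 : F), ?_⟩
    show T (z • (1 : F)) = z
    rw [map_smul, hT1, smul_eq_mul, mul_one]
  have hker : Nat.card T'.ker = 2 ^ (n - 1) := by
    have h1 : Nat.card F = Nat.card (F ⧸ T'.ker) * Nat.card T'.ker :=
      AddSubgroup.card_eq_card_quotient_mul_card_addSubgroup T'.ker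
    have h2 : Nat.card (F ⧸ T'.ker) = 2 := by
      rw [Nat.card_congr (QuotientAddGroup.quotientKerEquivOfSurjective T' hsurj).toEquiv]
      simp [Nat.card_eq_fintype_card]
    have h3 : Nat.card F = 2 ^ n := by rw [Nat.card_eq_fintype_card, hF]
    rw [h2, h3] at h1
    have h4 : 2 ^ n = 2 * 2 ^ (n - 1) := by
      conv_lhs => rw [← Nat.sub_add_cancel hn]
      rw [pow_succ]
      ring
    omega
  -- the set
  set S₀ : Set (F × F) := {p | T (p.1 * p.2) = 0} with hS₀
  refine ⟨pt '' S₀, ?_, ?_, ?_⟩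
  · -- cardinality
    rw [Set.ncard_image_of_injective _ pt_injective, ← Nat.card_coe_set_eq]
    have e1 : Nat.card S₀ = Nat.card (Σ a : F, {b : F // T (a * b) = 0}) :=
      Nat.card_congr (Equiv.subtypeProdEquivSigmaSubtype fun a b => T (a * b) = 0)
    have hfib0 : Fintype.card {b : F // T ((0 : F) * b) = 0} = 2 ^ n := by
      rw [← Nat.card_eq_fintype_card,
        Nat.card_congr (Equiv.subtypeUnivEquiv (fun b => by simp))]
      rw [Nat.card_eq_fintype_card, hF]
    have hfib : ∀ a : F, a ≠ 0 → Fintype.card {b : F // T (a * b) = 0} = 2 ^ (n - 1) := by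
      intro a ha
      rw [← Nat.card_eq_fintype_card, ← hker]
      apply Nat.card_congr
      refine Equiv.subtypeEquiv (Equiv.mulLeft₀ a ha) (fun b => ?_)
      simp [AddMonoidHom.mem_ker]
      rfl
    rw [e1, Nat.card_eq_fintype_card, Fintype.card_sigma]
    have hsplit : ∑ a : F, Fintype.card {b : F // T (a * b) = 0}
        = Fintype.card {b : F // T ((0 : F) * b) = 0}
          + ∑ a ∈ Finset.univ.erase (0 : F), Fintype.card {b : F // T (a * b) = 0} :=
      (Finset.add_sum_erase _ _ (Finset.mem_univ 0)).symm
    rw [hsplit, hfib0]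
    have hsum2 : ∑ a ∈ Finset.univ.erase (0 : F), Fintype.card {b : F // T (a * b) = 0}
        = (2 ^ n - 1) * 2 ^ (n - 1) := by
      rw [Finset.sum_congr rfl (fun a ha => hfib a (Finset.ne_of_mem_erase ha)),
        Finset.sum_const, Finset.card_erase_of_mem (Finset.mem_univ 0), Finset.card_univ, hF,
        smul_eq_mul]
    rw [hsum2]
    have h2m : 2 ^ n = 2 * 2 ^ (n - 1) := by
      conv_lhs => rw [← Nat.sub_add_cancel hn]
      rw [pow_succ]; ring
    have hm1 : 1 ≤ 2 ^ (n - 1) := Nat.one_le_two_pow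
    set m := 2 ^ (n - 1)
    rw [h2m]
    have hdiv : 2 * m * (2 * m + 1) / 2 = m * (2 * m + 1) := by
      rw [show 2 * m * (2 * m + 1) = 2 * (m * (2 * m + 1)) by ring,
        Nat.mul_div_cancel_left _ two_pos]
    rw [hdiv]
    zify [show (1 : ℕ) ≤ 2 * m by omega]
    ring
  · rintro P ⟨p, hp, rfl⟩
    rw [conj_iff]
    intro h
    apply one_ne_zero (α := F)
    linear_combination h - p.1 * p.2 * htwo
  · rintro P ⟨p, hp, rfl⟩ Q ⟨r, hr, rfl⟩ R ⟨s, hs, rfl⟩ _ _ _ ⟨h1, h2, h3⟩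
    rw [conj_iff] at h1 h2 h3
    have he : s.1 = p.1 + r.1 := by
      linear_combination s.1 * h1 + p.1 * h2 + r.1 * h3 +
        (-p.1 - r.1 - p.2 * r.1 * s.1 - p.1 * r.2 * s.1 - p.1 * r.1 * s.2) * htwo
    have hf : s.2 = p.2 + r.2 := by
      linear_combination s.2 * h1 + p.2 * h2 + r.2 * h3 +
        (-p.2 - r.2 - p.2 * r.1 * s.2 - p.1 * r.2 * s.2 - p.2 * r.2 * s.1) * htwo
    have key : s.1 * s.2 = p.1 * p.2 + r.1 * r.2 + 1 := by
      rw [he, hf]; linear_combination h1 - htwo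
    have hTs : T (s.1 * s.2) = 1 := by
      rw [key, map_add, map_add, hp, hr, hT1]
      simp
    have : T (s.1 * s.2) = 0 := hs
    rw [this] at hTs
    exact one_ne_zero hTs.symm
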